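/- arXiv:2310.13658 — 5 statements merged into one kernel-verified Lean document; each statement's English description precedes it below -/
import Mathlib

section
/- For every integer n ≥ 0, p(n) = ∑_{k=1}^{n+1} S^{(1)}_{n+1,k} · μ(k), where the sum is over k from 1 to n+1. -/
open Finset

/-- The number of partitions of `n`. -/
def p (n : ℕ) : ℕ := Fintype.card (Nat.Partition n)

/-- The partition function extended by zero to negative integer arguments. -/
def pz (m : ℤ) : ℤ := if 0 ≤ m then (p m.toNat : ℤ) else 0

/-- `S r n k` : the total number of parts equal to `k` in all partitions of `n`
whose parts are all at least `r`. -/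
def S (r n k : ℕ) : ℕ :=
  ∑ P : Nat.Partition n, if ∀ i ∈ P.parts, r ≤ i then P.parts.count k else 0

def T (N k : ℕ) : ℕ := ∑ P : Nat.Partition N, P.parts.count k

/-- Partitions of `N` containing a part `k` correspond to partitions of `N - k`. -/
def remEquiv (N k : ℕ) (hk0 : 0 < k) (hk : k ≤ N) :
    {P : Nat.Partition N // k ∈ P.parts} ≃ Nat.Partition (N - k) where
  toFun P := ⟨P.1.parts.erase k,
    fun hi => P.1.parts_pos (Multiset.mem_of_mem_erase hi), by
      have h : k + (P.1.parts.erase k).sum = N := by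
        rw [← Multiset.sum_cons, Multiset.cons_erase P.2, P.1.parts_sum]
      omega⟩
  invFun Q := ⟨⟨k ::ₘ Q.parts, by
      intro i hi
      rcases Multiset.mem_cons.mp hi with h | h
      · exact h ▸ hk0
      · exact Q.parts_pos h, by
      rw [Multiset.sum_cons, Q.parts_sum]; omega⟩, Multiset.mem_cons_self _ _⟩
  left_inv P := by
    apply Subtype.ext; apply Nat.Partition.ext
    exact Multiset.cons_erase P.2
  right_inv Q := by
    apply Nat.Partition.ext
    exact Multiset.erase_cons_head _ _

lemma count_eq_zero_of_gt {N k : ℕ} (P : Nat.Partition N) (h : N < k) :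
    P.parts.count k = 0 := by
  rw [Multiset.count_eq_zero]
  intro hk
  have := Multiset.single_le_sum (fun x _ => Nat.zero_le x) k hk
  rw [P.parts_sum] at this
  omega

lemma T_rec (N k : ℕ) (hk0 : 0 < k) (hk : k ≤ N) :
    T N k = p (N - k) + T (N - k) k := by
  classical
  have h1 : T N k = ∑ P : {P : Nat.Partition N // k ∈ P.parts}, P.1.parts.count k := by
    rw [T]
    rw [← Finset.sum_filter_of_ne (p := fun P : Nat.Partition N => k ∈ P.parts)
      (fun P _ hne => by
        by_contra h
        exact hne (Multiset.count_eq_zero.mpr h))]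
    exact Finset.sum_subtype _ (fun x => by simp) _
  rw [h1, ← Equiv.sum_comp (remEquiv N k hk0 hk).symm
    (fun P : {P : Nat.Partition N // k ∈ P.parts} => P.1.parts.count k)]
  have h2 : ∀ Q : Nat.Partition (N - k),
      ((remEquiv N k hk0 hk).symm Q).1.parts.count k = Q.parts.count k + 1 := by
    intro Q
    simp [remEquiv, Multiset.count_cons_self]
  simp only [h2]
  rw [Finset.sum_add_distrib]
  simp [T, p, add_comm, Finset.card_univ]

lemma T_closed (k : ℕ) (hk0 : 0 < k) : ∀ N, T N k = ∑ j ∈ Finset.range (N / k), p (N - (j + 1) * k) := by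
  intro N
  induction N using Nat.strong_induction_on with
  | _ N ih =>
    rcases lt_or_ge N k with h | h
    · have hd : N / k = 0 := Nat.div_eq_of_lt h
      rw [hd]
      simp [T, count_eq_zero_of_gt _ h]
    · rw [T_rec N k hk0 h, ih (N - k) (by omega)]
      rw [Nat.div_eq_sub_div hk0 h, Finset.sum_range_succ', add_comm]
      congr 1
      · apply Finset.sum_congr rfl
        intro j _
        congr 1
        have : (j + 1 + 1) * k = (j + 1) * k + k := by ring
        omega
      · congr 1
        omega


lemma S_one_eq (N k : ℕ) : S 1 N k = T N k := by
  unfold S T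
  apply Finset.sum_congr rfl
  intro P _
  rw [if_pos]
  intro i hi
  exact P.parts_pos hi

open ArithmeticFunction in
lemma sum_moebius_divisors (m : ℕ) (hm : m ≠ 0) :
    ∑ d ∈ m.divisors, (moebius d : ℤ) = if m = 1 then 1 else 0 := by
  have h := congrArg (fun f : ArithmeticFunction ℤ => f m) moebius_mul_coe_zeta
  simp only [mul_apply, one_apply] at h
  rw [Nat.sum_divisorsAntidiagonal (f := fun d e => (moebius d : ℤ) * (zeta : ArithmeticFunction ℤ) e)] at h
  rw [← h]
  apply Finset.sum_congr rfl
  intro d hd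
  have hdvd := Nat.dvd_of_mem_divisors hd
  have h2 : m / d ≠ 0 := by
    have := Nat.div_mul_cancel hdvd
    intro h0
    rw [h0, zero_mul] at this
    exact hm this.symm
  simp [natCoe_apply, zeta_apply_ne h2]

open ArithmeticFunction

theorem partition_eq_sum_S1_moebius (n : ℕ) :
    (p n : ℤ) =
      ∑ k ∈ Finset.Icc 1 (n + 1),
        (S 1 (n + 1) k : ℤ) * ArithmeticFunction.moebius k := by
  have hS : ∀ k ∈ Finset.Icc 1 (n + 1),
      (S 1 (n + 1) k : ℤ) * moebius k
        = ∑ j ∈ Finset.range ((n + 1) / k), (p (n + 1 - (j + 1) * k) : ℤ) * moebius k := by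
    intro k hk
    rw [Finset.mem_Icc] at hk
    rw [S_one_eq, T_closed k (by omega), Nat.cast_sum, Finset.sum_mul]
  rw [Finset.sum_congr rfl hS, Finset.sum_sigma']
  have key : ∑ x ∈ (Finset.Icc 1 (n + 1)).sigma (fun k => Finset.range ((n + 1) / k)),
        (p (n + 1 - (x.2 + 1) * x.1) : ℤ) * moebius x.1
      = ∑ t ∈ (Finset.Icc 1 (n + 1)).sigma (fun m => m.divisors),
        (p (n + 1 - t.1) : ℤ) * moebius t.2 := by
    refine Finset.sum_nbij' (fun x => ⟨(x.2 + 1) * x.1, x.1⟩) (fun t => ⟨t.2, t.1 / t.2 - 1⟩)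
      ?_ ?_ ?_ ?_ ?_
    · rintro ⟨k, j⟩ hx
      simp only [Finset.mem_sigma, Finset.mem_Icc, Finset.mem_range] at hx ⊢
      obtain ⟨⟨hk1, hk2⟩, hj⟩ := hx
      have hmul : (j + 1) * k ≤ n + 1 := (Nat.le_div_iff_mul_le (by omega)).mp hj
      simp only [Nat.mem_divisors]
      exact ⟨⟨by nlinarith, hmul⟩, ⟨⟨j + 1, mul_comm _ _⟩, by positivity⟩⟩
    · rintro ⟨m, d⟩ ht
      simp only [Finset.mem_sigma, Finset.mem_Icc, Nat.mem_divisors, Finset.mem_range] at ht ⊢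
      obtain ⟨⟨hm1, hm2⟩, hd, hm0⟩ := ht
      have hd0 : 0 < d := Nat.pos_of_dvd_of_pos hd (by omega)
      have hdm : d ≤ m := Nat.le_of_dvd (by omega) hd
      have h1 : 1 ≤ m / d := (Nat.one_le_div_iff hd0).mpr hdm
      have h2 : m / d ≤ (n + 1) / d := Nat.div_le_div_right hm2
      exact ⟨⟨hd0, by omega⟩, by omega⟩
    · rintro ⟨k, j⟩ hx
      simp only [Finset.mem_sigma, Finset.mem_Icc, Finset.mem_range] at hx
      obtain ⟨⟨hk1, hk2⟩, hj⟩ := hx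
      have : (j + 1) * k / k = j + 1 := Nat.mul_div_cancel _ (by omega)
      simp [this]
    · rintro ⟨m, d⟩ ht
      simp only [Finset.mem_sigma, Finset.mem_Icc, Nat.mem_divisors] at ht
      obtain ⟨⟨hm1, hm2⟩, hd, hm0⟩ := ht
      have hd0 : 0 < d := Nat.pos_of_dvd_of_pos hd (by omega)
      have hdm : d ≤ m := Nat.le_of_dvd (by omega) hd
      have h1 : 1 ≤ m / d := (Nat.one_le_div_iff hd0).mpr hdm
      have : (m / d - 1 + 1) * d = m := by
        rw [Nat.sub_add_cancel h1, Nat.div_mul_cancel hd]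
      simp [this]
    · rintro ⟨k, j⟩ _
      rfl
  rw [key, Finset.sum_sigma]
  have step : ∀ m ∈ Finset.Icc 1 (n + 1),
      (∑ d ∈ m.divisors, (p (n + 1 - m) : ℤ) * moebius d)
        = if m = 1 then (p n : ℤ) else 0 := by
    intro m hm
    rw [Finset.mem_Icc] at hm
    rw [← Finset.mul_sum, sum_moebius_divisors m (by omega)]
    by_cases h : m = 1 <;> simp [h]
  rw [Finset.sum_congr rfl step, Finset.sum_ite_eq' (Finset.Icc 1 (n + 1)) 1]
  simp
end

section
/- For every integer n ≥ 0, p(n) = -∑_{k=2}^{n+2} S^{(2)}_{n+2,k} · μ(k), where the sum is over k from 2 to n+2. -/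
open Finset

/-- Number of partitions of `m` with all parts at least 2. -/
def q (m : ℕ) : ℕ :=
  (Finset.univ.filter (fun P : Nat.Partition m => ∀ i ∈ P.parts, 2 ≤ i)).card

lemma q_zero : q 0 = 1 := by
  rw [q]
  rw [Finset.filter_true_of_mem (by intro P _; simp)]
  simp [Fintype.card]

lemma card_filter_count (N j k : ℕ) (hk : 2 ≤ k) (hjk : j * k ≤ N) :
    (Finset.univ.filter (fun P : Nat.Partition N =>
      (∀ i ∈ P.parts, 2 ≤ i) ∧ j ≤ P.parts.count k)).card = q (N - j * k) := by
  rw [q]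
  refine Finset.card_bij'
    (fun P hP => ⟨P.parts - Multiset.replicate j k, ?_, ?_⟩)
    (fun Q hQ => ⟨Q.parts + Multiset.replicate j k, ?_, ?_⟩) ?_ ?_ ?_ ?_
  · intro i hi
    exact P.parts_pos (Multiset.mem_of_le (tsub_le_self) hi)
  · simp only [Finset.mem_filter] at hP
    have hle : Multiset.replicate j k ≤ P.parts :=
      Multiset.le_count_iff_replicate_le.mp hP.2.2
    have h1 : P.parts - Multiset.replicate j k + Multiset.replicate j k = P.parts :=
      tsub_add_cancel_of_le hle
    have h2 := congrArg Multiset.sum h1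
    rw [Multiset.sum_add, Multiset.sum_replicate, smul_eq_mul, P.parts_sum] at h2
    omega
  · intro i hi
    rcases Multiset.mem_add.mp hi with h | h
    · exact Q.parts_pos h
    · rw [Multiset.eq_of_mem_replicate h]; omega
  · rw [Multiset.sum_add, Multiset.sum_replicate, smul_eq_mul, Q.parts_sum]
    omega
  · intro P hP
    simp only [Finset.mem_filter] at hP ⊢
    exact ⟨Finset.mem_univ _, fun i hi => hP.2.1 i (Multiset.mem_of_le (tsub_le_self) hi)⟩
  · intro Q hQ
    simp only [Finset.mem_filter] at hQ ⊢
    refine ⟨Finset.mem_univ _, ?_, ?_⟩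
    · intro i hi
      rcases Multiset.mem_add.mp hi with h | h
      · exact hQ.2 i h
      · rw [Multiset.eq_of_mem_replicate h]; exact hk
    · simp [Multiset.count_add, Multiset.count_replicate]
  · intro P hP
    simp only [Finset.mem_filter] at hP
    have hle : Multiset.replicate j k ≤ P.parts :=
      Multiset.le_count_iff_replicate_le.mp hP.2.2
    exact Nat.Partition.ext (tsub_add_cancel_of_le hle)
  · intro Q hQ
    exact Nat.Partition.ext (add_tsub_cancel_right _ _)

lemma count_le_div (N k : ℕ) (hk : 0 < k) (P : Nat.Partition N) :
    P.parts.count k ≤ N / k := by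
  rw [Nat.le_div_iff_mul_le hk]
  have hle : Multiset.replicate (P.parts.count k) k ≤ P.parts :=
    Multiset.le_count_iff_replicate_le.mp le_rfl
  have h1 : P.parts - _ + _ = P.parts := tsub_add_cancel_of_le hle
  have h2 := congrArg Multiset.sum h1
  rw [Multiset.sum_add, Multiset.sum_replicate, smul_eq_mul, P.parts_sum] at h2
  omega

lemma S_eq (N k : ℕ) (hk : 2 ≤ k) :
    S 2 N k = ∑ j ∈ Finset.Icc 1 (N / k), q (N - j * k) := by
  rw [S, ← Finset.sum_filter]
  have hcount : ∀ P : Nat.Partition N,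
      P.parts.count k = ∑ j ∈ Finset.Icc 1 (N / k), if j ≤ P.parts.count k then 1 else 0 := by
    intro P
    rw [← Finset.sum_filter]
    have : (Finset.Icc 1 (N / k)).filter (fun j => j ≤ P.parts.count k)
        = Finset.Icc 1 (P.parts.count k) := by
      ext j
      simp only [Finset.mem_filter, Finset.mem_Icc]
      have := count_le_div N k (by omega) P
      omega
    rw [this]
    simp
  calc ∑ P ∈ Finset.univ.filter (fun P : Nat.Partition N => ∀ i ∈ P.parts, 2 ≤ i),
        P.parts.count k
      = ∑ P ∈ Finset.univ.filter (fun P : Nat.Partition N => ∀ i ∈ P.parts, 2 ≤ i),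
        ∑ j ∈ Finset.Icc 1 (N / k), if j ≤ P.parts.count k then 1 else 0 := by
        exact Finset.sum_congr rfl fun P _ => hcount P
    _ = ∑ j ∈ Finset.Icc 1 (N / k),
        ∑ P ∈ Finset.univ.filter (fun P : Nat.Partition N => ∀ i ∈ P.parts, 2 ≤ i),
        if j ≤ P.parts.count k then 1 else 0 := Finset.sum_comm
    _ = ∑ j ∈ Finset.Icc 1 (N / k), q (N - j * k) := by
        refine Finset.sum_congr rfl fun j hj => ?_
        rw [← Finset.sum_filter, Finset.filter_filter, ← Finset.card_eq_sum_ones]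
        refine card_filter_count N j k hk ?_
        simp only [Finset.mem_Icc] at hj
        calc j * k ≤ N / k * k := Nat.mul_le_mul_right k hj.2
        _ ≤ N := Nat.div_mul_le_self N k

lemma p_succ (t : ℕ) : p (t + 1) = q (t + 1) + p t := by
  rw [p, p]
  rw [← Finset.card_univ (α := Nat.Partition (t+1)),
    ← Finset.card_filter_add_card_filter_not
      (p := fun P : Nat.Partition (t+1) => ∀ i ∈ P.parts, 2 ≤ i), q]
  congr 1
  rw [← Finset.card_univ (α := Nat.Partition t)]
  refine Finset.card_bij'
    (fun P hP => ⟨P.parts.erase 1, ?_, ?_⟩)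
    (fun Q hQ => ⟨Q.parts + {1}, ?_, ?_⟩) ?_ ?_ ?_ ?_
  · intro i hi
    exact P.parts_pos (Multiset.mem_of_mem_erase hi)
  · simp only [Finset.mem_filter, not_forall] at hP
    obtain ⟨-, i, hi, hlt⟩ := hP
    have hi1 : i = 1 := by have := P.parts_pos hi; omega
    subst hi1
    have h1 : (1 : ℕ) ∈ P.parts := hi
    have := Multiset.sum_erase (a := 1) (s := P.parts) h1
    have := P.parts_sum
    omega
  · intro i hi
    rcases Multiset.mem_add.mp hi with h | h
    · exact Q.parts_pos h
    · simp only [Multiset.mem_singleton] at h; omega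
  · rw [Multiset.sum_add, Q.parts_sum]; simp
  · intro P hP; exact Finset.mem_univ _
  · intro Q hQ
    simp only [Finset.mem_filter, not_forall]
    exact ⟨Finset.mem_univ _, 1, by simp, by omega⟩
  · intro P hP
    simp only [Finset.mem_filter, not_forall] at hP
    obtain ⟨-, i, hi, hlt⟩ := hP
    have hi1 : i = 1 := by have := P.parts_pos hi; omega
    subst hi1
    refine Nat.Partition.ext ?_
    simp only
    rw [add_comm, Multiset.singleton_add, Multiset.cons_erase hi]
  · intro Q hQ
    refine Nat.Partition.ext ?_
    simp only
    rw [add_comm, Multiset.singleton_add, Multiset.erase_cons_head]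

lemma sum_q (n : ℕ) : ∑ t ∈ Finset.range (n + 1), q t = p n := by
  induction n with
  | zero => simp [q_zero, p]
  | succ n ih => rw [Finset.sum_range_succ, ih, p_succ, add_comm]


lemma moebius_divisors (m : ℕ) (hm : 2 ≤ m) :
    ∑ k ∈ m.divisors.erase 1, ArithmeticFunction.moebius k = -1 := by
  have h0 : m ≠ 0 := by omega
  have h1 : (1 : ℕ) ∈ m.divisors := Nat.one_mem_divisors.mpr h0
  have hsum : ∑ k ∈ m.divisors, ArithmeticFunction.moebius k = 0 := by
    have h : (ArithmeticFunction.moebius * (ArithmeticFunction.zeta : ArithmeticFunction ℤ)) m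
        = (1 : ArithmeticFunction ℤ) m := by
      rw [ArithmeticFunction.moebius_mul_coe_zeta]
    rwa [ArithmeticFunction.coe_mul_zeta_apply, ArithmeticFunction.one_apply,
      if_neg (by omega)] at h
  have h2 := Finset.add_sum_erase _ ArithmeticFunction.moebius h1
  rw [hsum] at h2
  rw [ArithmeticFunction.moebius_apply_one] at h2
  omega

lemma filter_dvd_eq (N m : ℕ) (hm2 : 2 ≤ m) (hmN : m ≤ N) :
    (Finset.Icc 2 N).filter (· ∣ m) = m.divisors.erase 1 := by
  ext d
  simp only [Finset.mem_filter, Finset.mem_Icc, Finset.mem_erase, Nat.mem_divisors]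
  constructor
  · rintro ⟨⟨h2, _⟩, hd⟩
    exact ⟨by omega, hd, by omega⟩
  · rintro ⟨hne, hd, -⟩
    have hd0 : d ≠ 0 := by rintro rfl; rw [zero_dvd_iff] at hd; omega
    have : d ≤ m := Nat.le_of_dvd (by omega) hd
    exact ⟨⟨by omega, by omega⟩, hd⟩

lemma inner_reindex (N k : ℕ) (hk : 2 ≤ k) (f : ℕ → ℤ) :
    ∑ j ∈ Finset.Icc 1 (N / k), f (j * k)
      = ∑ m ∈ (Finset.Icc 2 N).filter (k ∣ ·), f m := by
  refine Finset.sum_nbij' (i := fun j => j * k) (j := fun m => m / k) ?_ ?_ ?_ ?_ ?_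
  · intro j hj
    simp only [Finset.mem_Icc] at hj
    simp only [Finset.mem_filter, Finset.mem_Icc]
    refine ⟨⟨?_, ?_⟩, dvd_mul_left k j⟩
    · calc 2 ≤ k := hk
        _ = 1 * k := (one_mul k).symm
        _ ≤ j * k := Nat.mul_le_mul_right k hj.1
    · calc j * k ≤ N / k * k := Nat.mul_le_mul_right k hj.2
        _ ≤ N := Nat.div_mul_le_self N k
  · intro m hm
    simp only [Finset.mem_filter, Finset.mem_Icc] at hm
    obtain ⟨⟨hm2, hmN⟩, hdvd⟩ := hm
    simp only [Finset.mem_Icc]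
    constructor
    · rw [Nat.one_le_div_iff (by omega)]
      exact Nat.le_of_dvd (by omega) hdvd
    · exact Nat.div_le_div_right hmN
  · intro j hj
    exact Nat.mul_div_cancel j (by omega)
  · intro m hm
    simp only [Finset.mem_filter] at hm
    exact Nat.div_mul_cancel hm.2
  · intro j hj; rfl

theorem partition_eq_neg_sum_S2_moebius (n : ℕ) :
    (p n : ℤ) =
      -∑ k ∈ Finset.Icc 2 (n + 2),
        (S 2 (n + 2) k : ℤ) * ArithmeticFunction.moebius k := by
  have key : ∑ k ∈ Finset.Icc 2 (n + 2),
      (S 2 (n + 2) k : ℤ) * ArithmeticFunction.moebius k = -(p n : ℤ) := by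
    calc ∑ k ∈ Finset.Icc 2 (n + 2), (S 2 (n + 2) k : ℤ) * ArithmeticFunction.moebius k
        = ∑ k ∈ Finset.Icc 2 (n + 2), ∑ j ∈ Finset.Icc 1 ((n + 2) / k),
            (q (n + 2 - j * k) : ℤ) * ArithmeticFunction.moebius k := by
          refine Finset.sum_congr rfl fun k hk => ?_
          rw [S_eq (n + 2) k (Finset.mem_Icc.mp hk).1]
          push_cast
          rw [Finset.sum_mul]
      _ = ∑ k ∈ Finset.Icc 2 (n + 2),
            ∑ m ∈ (Finset.Icc 2 (n + 2)).filter (k ∣ ·),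
            (q (n + 2 - m) : ℤ) * ArithmeticFunction.moebius k := by
          refine Finset.sum_congr rfl fun k hk => ?_
          exact inner_reindex (n + 2) k (Finset.mem_Icc.mp hk).1
            (fun m => (q (n + 2 - m) : ℤ) * ArithmeticFunction.moebius k)
      _ = ∑ k ∈ Finset.Icc 2 (n + 2), ∑ m ∈ Finset.Icc 2 (n + 2),
            if k ∣ m then (q (n + 2 - m) : ℤ) * ArithmeticFunction.moebius k else 0 := by
          refine Finset.sum_congr rfl fun k _ => Finset.sum_filter _ _
      _ = ∑ m ∈ Finset.Icc 2 (n + 2), ∑ k ∈ Finset.Icc 2 (n + 2),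
            if k ∣ m then (q (n + 2 - m) : ℤ) * ArithmeticFunction.moebius k else 0 :=
          Finset.sum_comm
      _ = ∑ m ∈ Finset.Icc 2 (n + 2),
            ∑ k ∈ (Finset.Icc 2 (n + 2)).filter (· ∣ m),
            (q (n + 2 - m) : ℤ) * ArithmeticFunction.moebius k := by
          refine Finset.sum_congr rfl fun m _ => (Finset.sum_filter _ _).symm
      _ = ∑ m ∈ Finset.Icc 2 (n + 2), (q (n + 2 - m) : ℤ) * (-1) := by
          refine Finset.sum_congr rfl fun m hm => ?_
          obtain ⟨hm2, hmN⟩ := Finset.mem_Icc.mp hm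
          rw [filter_dvd_eq (n + 2) m hm2 hmN, ← Finset.mul_sum, moebius_divisors m hm2]
      _ = -∑ m ∈ Finset.Icc 2 (n + 2), (q (n + 2 - m) : ℤ) := by
          rw [← Finset.sum_neg_distrib]
          exact Finset.sum_congr rfl fun m _ => by ring
      _ = -∑ t ∈ Finset.range (n + 1), (q t : ℤ) := by
          congr 1
          refine Finset.sum_nbij' (i := fun m => n + 2 - m) (j := fun t => n + 2 - t)
            ?_ ?_ ?_ ?_ ?_
          · intro m hm
            simp only [Finset.mem_Icc] at hm
            simp only [Finset.mem_range]
            omega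
          · intro t ht
            simp only [Finset.mem_range] at ht
            simp only [Finset.mem_Icc]
            omega
          · intro m hm
            simp only [Finset.mem_Icc] at hm
            show n + 2 - (n + 2 - m) = m
            omega
          · intro t ht
            simp only [Finset.mem_range] at ht
            show n + 2 - (n + 2 - t) = t
            omega
          · intro m _; rfl
      _ = -(p n : ℤ) := by
          rw [← sum_q n]
          push_cast
          rfl
  rw [key, neg_neg]
end

section
/- For all integers n ≥ k > r ≥ 1, S^{(r+1)}_{n+r,k} = S^{(r)}_{n+r,k} - S^{(r)}_{n,k}. -/
open Finset

/-- Insert a part `r` into a partition of `n` to get a partition of `n + r`. -/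
def insertPart (r n : ℕ) (hr : 0 < r) (P : Nat.Partition n) : Nat.Partition (n + r) where
  parts := r ::ₘ P.parts
  parts_pos := by
    intro i hi
    rcases Multiset.mem_cons.1 hi with h | h
    · omega
    · exact P.parts_pos h
  parts_sum := by simp [P.parts_sum, Nat.add_comm]

/-- Erase a part `r` from a partition of `n + r` to get a partition of `n`. -/
def erasePart (r n : ℕ) (P : Nat.Partition (n + r)) (h : r ∈ P.parts) : Nat.Partition n where
  parts := P.parts.erase r
  parts_pos := fun hi => P.parts_pos (Multiset.mem_of_mem_erase hi)
  parts_sum := by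
    have hc : (r ::ₘ P.parts.erase r).sum = P.parts.sum := by
      rw [Multiset.cons_erase h]
    rw [Multiset.sum_cons, P.parts_sum] at hc
    omega

theorem S_key (n k r : ℕ) (h1 : 1 ≤ r) (h2 : r < k) :
    S r (n + r) k = S (r + 1) (n + r) k + S r n k := by
  classical
  unfold S
  rw [← Finset.sum_filter_add_sum_filter_not Finset.univ
      (fun P : Nat.Partition (n + r) => r ∈ P.parts), add_comm]
  congr 1
  · -- partitions not containing r
    rw [Finset.sum_filter]
    apply Finset.sum_congr rfl
    intro P _
    by_cases hm : r ∈ P.parts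
    · have : ¬ (∀ i ∈ P.parts, r + 1 ≤ i) := fun h => by have := h r hm; omega
      simp [hm, this]
      exact fun h => (this fun i hi => h i hi).elim
    · simp only [hm, not_false_iff, if_true]
      congr 1
      simp only [eq_iff_iff]
      constructor
      · intro h i hi
        have := h i hi
        rcases Nat.lt_or_ge r i with h' | h'
        · omega
        · have : i = r := by omega
          exact absurd (this ▸ hi) hm
      · intro h i hi
        have := h i hi; omega
  · -- partitions containing r ↔ partitions of n
    refine Finset.sum_bij' (i := fun P hP => erasePart r n P (by simpa using hP))
      (j := fun Q _ => insertPart r n h1 Q) ?_ ?_ ?_ ?_ ?_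
    · intro a ha; exact Finset.mem_univ _
    · intro a ha
      simp only [Finset.mem_filter, Finset.mem_univ, true_and]
      exact Multiset.mem_cons_self r a.parts
    · intro a ha
      apply Nat.Partition.ext
      show r ::ₘ a.parts.erase r = a.parts
      exact Multiset.cons_erase (by simpa using ha)
    · intro a ha
      apply Nat.Partition.ext
      show (r ::ₘ a.parts).erase r = a.parts
      exact Multiset.erase_cons_head r a.parts
    · intro a ha
      have ha' : r ∈ a.parts := by simpa using ha
      have hcnt : (erasePart r n a (by simpa using ha)).parts.count k = a.parts.count k := by
        show (a.parts.erase r).count k = a.parts.count k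
        exact Multiset.count_erase_of_ne (by omega) _
      have hcond : (∀ i ∈ a.parts, r ≤ i) ↔
          (∀ i ∈ (erasePart r n a (by simpa using ha)).parts, r ≤ i) := by
        constructor
        · intro h i hi
          exact h i (Multiset.mem_of_mem_erase hi)
        · intro h i hi
          rcases eq_or_ne i r with h' | h'
          · omega
          · exact h i (Multiset.mem_erase_of_ne h' |>.2 hi)
      by_cases hc : ∀ i ∈ a.parts, r ≤ i
      · rw [if_pos hc, if_pos (hcond.1 hc), hcnt]
      · rw [if_neg hc, if_neg (fun h => hc (hcond.2 h))]


theorem S_succ_eq_sub (n k r : ℕ) (h1 : 1 ≤ r) (h2 : r < k) (h3 : k ≤ n) :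
    (S (r + 1) (n + r) k : ℤ) = (S r (n + r) k : ℤ) - (S r n k : ℤ) := by
  have := S_key n k r h1 h2
  omega
end

section
/- For every integer n ≥ 0, the number of partitions of n with no parts equal to 1 equals -∑_{k=3}^{n+3} S^{(3)}_{n+3,k} · μ(k); equivalently, p(n) - p(n-1) = -∑_{k=3}^{n+3} S^{(3)}_{n+3,k} · μ(k), where p(m) = 0 for m < 0. -/
open Finset

/-- number of partitions of m with all parts ≥ r -/
def Q (r m : ℕ) : ℕ := Fintype.card {P : Nat.Partition m // ∀ i ∈ P.parts, r ≤ i}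

def addE (r k j m : ℕ) (hr : 1 ≤ r) (hrk : r ≤ k) :
    {P : Nat.Partition m // ∀ i ∈ P.parts, r ≤ i} ≃
    {P : Nat.Partition (m + j * k) // (∀ i ∈ P.parts, r ≤ i) ∧ j ≤ P.parts.count k} where
  toFun P := ⟨⟨P.1.parts + Multiset.replicate j k, by
      intro i hi
      rcases Multiset.mem_add.1 hi with h | h
      · exact P.1.parts_pos h
      · rw [Multiset.eq_of_mem_replicate h]; omega, by
      rw [Multiset.sum_add, Multiset.sum_replicate, P.1.parts_sum, smul_eq_mul]⟩, by
      constructor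
      · intro i hi
        rcases Multiset.mem_add.1 hi with h | h
        · exact P.2 i h
        · rw [Multiset.eq_of_mem_replicate h]; exact hrk
      · rw [Multiset.count_add, Multiset.count_replicate_self]; omega⟩
  invFun P := ⟨⟨P.1.parts - Multiset.replicate j k, by
      intro i hi
      exact P.1.parts_pos (Multiset.mem_of_le (Multiset.sub_le_self _ _) hi), by
      have hle : Multiset.replicate j k ≤ P.1.parts :=
        (Multiset.le_count_iff_replicate_le).1 P.2.2
      have h1 : (P.1.parts - Multiset.replicate j k) + Multiset.replicate j k = P.1.parts :=
        tsub_add_cancel_of_le hle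
      have h2 := congrArg Multiset.sum h1
      rw [Multiset.sum_add, Multiset.sum_replicate, P.1.parts_sum, smul_eq_mul] at h2
      omega⟩, by
      intro i hi
      exact P.2.1 i (Multiset.mem_of_le (Multiset.sub_le_self _ _) hi)⟩
  left_inv P := by
    ext1; ext1
    simp
  right_inv P := by
    ext1; ext1
    simp only
    exact tsub_add_cancel_of_le ((Multiset.le_count_iff_replicate_le).1 P.2.2)

theorem jk_le (n j k : ℕ) (P : Nat.Partition n) (h : j ≤ P.parts.count k) : j * k ≤ n := by
  have hle : Multiset.replicate j k ≤ P.parts := (Multiset.le_count_iff_replicate_le).1 h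
  have h1 : (P.parts - Multiset.replicate j k) + Multiset.replicate j k = P.parts :=
    tsub_add_cancel_of_le hle
  have h2 := congrArg Multiset.sum h1
  rw [Multiset.sum_add, Multiset.sum_replicate, P.parts_sum, smul_eq_mul] at h2
  omega

theorem card_count_ge (r k j n : ℕ) (hr : 1 ≤ r) (hrk : r ≤ k) :
    Fintype.card {P : Nat.Partition n // (∀ i ∈ P.parts, r ≤ i) ∧ j ≤ P.parts.count k} =
      if j * k ≤ n then Q r (n - j * k) else 0 := by
  split
  · next h =>
    obtain ⟨m, rfl⟩ : ∃ m, n = m + j * k := ⟨n - j * k, by omega⟩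
    rw [Nat.add_sub_cancel]
    exact (Fintype.card_congr (addE r k j m hr hrk)).symm
  · next h =>
    rw [Fintype.card_eq_zero_iff]
    constructor
    rintro ⟨P, _, hP2⟩
    exact h (jk_le n j k P hP2)

theorem S_eq_s8 (r n k : ℕ) (hk : 1 ≤ k) :
    S r n k = ∑ j ∈ Icc 1 n,
      Fintype.card {P : Nat.Partition n // (∀ i ∈ P.parts, r ≤ i) ∧ j ≤ P.parts.count k} := by
  have hc : ∀ P : Nat.Partition n, P.parts.count k ≤ n := by
    intro P
    have := jk_le n (P.parts.count k) k P le_rfl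
    calc P.parts.count k ≤ P.parts.count k * k := Nat.le_mul_of_pos_right _ hk
      _ ≤ n := this
  have : ∀ j, Fintype.card {P : Nat.Partition n // (∀ i ∈ P.parts, r ≤ i) ∧ j ≤ P.parts.count k}
      = ∑ P : Nat.Partition n, if (∀ i ∈ P.parts, r ≤ i) ∧ j ≤ P.parts.count k then 1 else 0 := by
    intro j
    rw [Fintype.card_subtype, Finset.card_filter]
  simp only [this]
  rw [Finset.sum_comm]
  unfold S
  congr 1
  ext P
  split
  · next hcond =>
    have hrw : ∀ j, ((∀ i ∈ P.parts, r ≤ i) ∧ j ≤ P.parts.count k) =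
        (j ≤ P.parts.count k) := fun j => by
      simp only [eq_iff_iff]; exact ⟨fun h => h.2, fun h => ⟨hcond, h⟩⟩
    simp only [hrw]
    have : (Icc 1 n).filter (fun j => j ≤ P.parts.count k) = Icc 1 (P.parts.count k) := by
      ext j
      simp only [Finset.mem_filter, Finset.mem_Icc]
      have := hc P
      omega
    rw [← Finset.card_filter, this, Nat.card_Icc]
    omega
  · next hcond =>
    refine (Finset.sum_eq_zero ?_).symm
    intro j hj
    rw [if_neg]
    exact fun h => hcond h.1

theorem S_eq_Q (r n k : ℕ) (hr : 1 ≤ r) (hrk : r ≤ k) :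
    S r n k = ∑ j ∈ Icc 1 n, if j * k ≤ n then Q r (n - j * k) else 0 := by
  rw [S_eq_s8 r n k (hr.trans hrk)]
  exact Finset.sum_congr rfl fun j _ => card_count_ge r k j n hr hrk

theorem Q_split (r n k : ℕ) (hr : 1 ≤ r) (hrk : r ≤ k) (hkn : k ≤ n) :
    Q r n = Fintype.card {P : Nat.Partition n // (∀ i ∈ P.parts, r ≤ i) ∧ k ∉ P.parts}
      + Q r (n - k) := by
  have hcnt : Fintype.card {P : Nat.Partition n //
      (∀ i ∈ P.parts, r ≤ i) ∧ 1 ≤ P.parts.count k} = Q r (n - k) := by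
    rw [card_count_ge r k 1 n hr hrk, one_mul, if_pos hkn]
  rw [← hcnt]
  unfold Q
  rw [Fintype.card_subtype, Fintype.card_subtype, Fintype.card_subtype]
  rw [← Finset.card_filter_add_card_filter_not
    (s := Finset.univ.filter (fun P : Nat.Partition n => ∀ i ∈ P.parts, r ≤ i))
    (p := fun P => k ∈ P.parts), Finset.filter_filter, Finset.filter_filter]
  rw [add_comm]
  have e1 : Finset.univ.filter
        (fun P : Nat.Partition n => (∀ i ∈ P.parts, r ≤ i) ∧ k ∈ P.parts) =
      Finset.univ.filter
        (fun P : Nat.Partition n => (∀ i ∈ P.parts, r ≤ i) ∧ 1 ≤ P.parts.count k) := by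
    ext P
    simp [Multiset.one_le_count_iff_mem]
  rw [e1]

theorem Q_zero (r : ℕ) : Q r 0 = 1 := by
  unfold Q
  rw [Fintype.card_subtype, Finset.filter_true_of_mem]
  · rw [Finset.card_univ, Fintype.card_unique]
  · intro P _ i hi
    rw [Nat.Partition.partition_zero_parts] at hi
    exact absurd hi (Multiset.notMem_zero i)

theorem Q_one (r : ℕ) (hr : 2 ≤ r) : Q r 1 = 0 := by
  unfold Q
  rw [Fintype.card_eq_zero_iff]
  constructor
  rintro ⟨P, hP⟩
  have h1 : (1 : ℕ) ∈ P.parts := by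
    rw [Nat.Partition.partition_one_parts]
    exact Multiset.mem_singleton_self 1
  have := hP 1 h1
  omega

theorem card_eq_Q_succ (r n : ℕ) (hr : 1 ≤ r) :
    Fintype.card {P : Nat.Partition n // (∀ i ∈ P.parts, r ≤ i) ∧ r ∉ P.parts}
      = Q (r + 1) n := by
  unfold Q
  apply Fintype.card_congr
  apply Equiv.subtypeEquivRight
  intro P
  constructor
  · rintro ⟨h1, h2⟩ i hi
    have hd := h1 i hi
    have : i ≠ r := fun h => h2 (h ▸ hi)
    omega
  · intro h
    refine ⟨fun i hi => by have := h i hi; omega, fun h2 => by have := h r h2; omega⟩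

theorem Q_rec (r n : ℕ) (hr : 1 ≤ r) (hrn : r ≤ n) :
    Q r n = Q (r + 1) n + Q r (n - r) := by
  rw [Q_split r n r hr le_rfl hrn, card_eq_Q_succ r n hr]

theorem Q_one_eq_p (n : ℕ) : Q 1 n = Fintype.card (Nat.Partition n) := by
  unfold Q
  exact Fintype.card_congr (Equiv.subtypeUnivEquiv fun P i hi => P.parts_pos hi)

theorem Q2_sum (n : ℕ) : Q 2 n = ∑ t ∈ range (n / 2 + 1), Q 3 (n - 2 * t) := by
  induction n using Nat.strong_induction_on with
  | _ n ih =>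
    match n with
    | 0 => simp [Q_zero]
    | 1 =>
      have : (1 : ℕ) / 2 + 1 = 1 := by omega
      rw [this, Finset.sum_range_one]
      simp [Q_one 2 le_rfl, Q_one 3 (by omega)]
    | (n + 2) =>
      rw [Q_rec 2 (n + 2) one_le_two (by omega)]
      have h2 : n + 2 - 2 = n := by omega
      rw [h2, ih n (by omega)]
      have h3 : (n + 2) / 2 + 1 = (n / 2 + 1) + 1 := by omega
      rw [h3, Finset.sum_range_succ' (fun t => Q 3 (n + 2 - 2 * t)) (n / 2 + 1)]
      have h4 : ∀ i, n + 2 - 2 * (i + 1) = n - 2 * i := by intro i; omega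
      simp only [h4, Nat.mul_zero, Nat.sub_zero]
      rw [show (2 : ℕ) + 1 = 3 from rfl]
      omega

open ArithmeticFunction in
theorem divisor_sum_moebius (m : ℕ) (hm : 1 ≤ m) :
    ∑ k ∈ m.divisors, (moebius k : ℤ) = if m = 1 then 1 else 0 := by
  have h1 := coe_mul_zeta_apply (f := (moebius : ArithmeticFunction ℤ)) (x := m)
  rw [moebius_mul_coe_zeta] at h1
  rw [← h1, one_apply]

open ArithmeticFunction in
theorem g_eval (N m : ℕ) (hN : 3 ≤ N) (hm1 : 1 ≤ m) (hmN : m ≤ N) :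
    ∑ k ∈ Icc 3 N, (if k ∣ m then (moebius k : ℤ) else 0) =
      if m = 1 ∨ 2 ∣ m then 0 else -1 := by
  have hins : Icc 1 N = insert 1 (insert 2 (Icc 3 N)) := by
    ext x
    simp only [Finset.mem_Icc, Finset.mem_insert]
    omega
  have h2 : (2 : ℕ) ∉ Icc 3 N := by simp
  have h1 : (1 : ℕ) ∉ insert 2 (Icc 3 N) := by simp
  have hfull : ∑ k ∈ Icc 1 N, (if k ∣ m then (moebius k : ℤ) else 0) =
      if m = 1 then 1 else 0 := by
    rw [← divisor_sum_moebius m hm1]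
    rw [← Finset.sum_filter]
    apply Finset.sum_congr
    · ext k
      simp only [Finset.mem_filter, Finset.mem_Icc, Nat.mem_divisors]
      constructor
      · rintro ⟨⟨hk1, hkN⟩, hdvd⟩
        exact ⟨hdvd, by omega⟩
      · rintro ⟨hdvd, _⟩
        have hk1 : 1 ≤ k := Nat.pos_of_dvd_of_pos hdvd (by omega)
        have hkm : k ≤ m := Nat.le_of_dvd (by omega) hdvd
        exact ⟨⟨hk1, by omega⟩, hdvd⟩
    · intros; rfl
  rw [hins, Finset.sum_insert h1, Finset.sum_insert h2] at hfull
  rw [moebius_apply_one, moebius_apply_prime Nat.prime_two] at hfull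
  have hd1 : (1 : ℕ) ∣ m := one_dvd m
  rw [if_pos hd1] at hfull
  by_cases h2m : 2 ∣ m
  · rw [if_pos h2m] at hfull
    rw [if_pos (Or.inr h2m)]
    have : m ≠ 1 := by rintro rfl; omega
    rw [if_neg this] at hfull
    omega
  · rw [if_neg h2m] at hfull
    by_cases hm1' : m = 1
    · rw [if_pos (Or.inl hm1')]
      rw [if_pos hm1'] at hfull
      omega
    · rw [if_neg (by tauto)]
      rw [if_neg hm1'] at hfull
      omega

open ArithmeticFunction in
theorem key (n : ℕ) :
    ∑ k ∈ Icc 3 (n + 3), (S 3 (n + 3) k : ℤ) * moebius k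
      = -∑ t ∈ range (n / 2 + 1), (Q 3 (n - 2 * t) : ℤ) := by
  set N := n + 3 with hN
  obtain ⟨f, hf⟩ : ∃ f : ℕ → ℤ,
      f = fun m => if 1 ≤ m ∧ m ≤ N then (Q 3 (N - m) : ℤ) else 0 := ⟨_, rfl⟩
  -- Step A
  have stepA : ∀ k ∈ Icc 3 N, (S 3 N k : ℤ) = ∑ j ∈ Icc 1 N, f (j * k) := by
    intro k hk
    rw [Finset.mem_Icc] at hk
    rw [S_eq_Q 3 N k (by omega) (by omega)]
    push_cast
    apply Finset.sum_congr rfl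
    intro j hj
    rw [Finset.mem_Icc] at hj
    have h1 : 1 ≤ j * k := Nat.mul_pos (by omega) (by omega)
    simp only [hf]
    by_cases hle : j * k ≤ N
    · rw [if_pos hle, if_pos ⟨h1, hle⟩]
    · rw [if_neg hle, if_neg (fun hc => hle hc.2)]
  -- Step B
  have stepB : ∀ k ∈ Icc 3 N, ∑ j ∈ Icc 1 N, f (j * k)
      = ∑ m ∈ Icc 1 N, if k ∣ m then f m else 0 := by
    intro k hk
    rw [Finset.mem_Icc] at hk
    have hL : ∑ j ∈ Icc 1 N, f (j * k)
        = ∑ j ∈ (Icc 1 N).filter (fun j => j * k ≤ N), f (j * k) := by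
      symm
      apply Finset.sum_subset (Finset.filter_subset _ _)
      intro j hjI hjF
      have hnot : ¬ j * k ≤ N := fun h => hjF (Finset.mem_filter.2 ⟨hjI, h⟩)
      simp only [hf]
      exact if_neg (fun hc => hnot hc.2)
    rw [hL, ← Finset.sum_filter]
    apply Finset.sum_nbij' (fun j => j * k) (fun m => m / k)
    · intro j hj
      rw [Finset.mem_filter, Finset.mem_Icc] at hj
      rw [Finset.mem_filter, Finset.mem_Icc]
      have h1 : 1 ≤ j * k := Nat.mul_pos (by omega) (by omega)
      exact ⟨⟨h1, hj.2⟩, dvd_mul_left k j⟩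
    · intro m hm
      rw [Finset.mem_filter, Finset.mem_Icc] at hm
      rw [Finset.mem_filter, Finset.mem_Icc]
      obtain ⟨⟨hm1, hmN⟩, hdvd⟩ := hm
      have hkm : k ≤ m := Nat.le_of_dvd (by omega) hdvd
      have hmul : m / k * k = m := Nat.div_mul_cancel hdvd
      have h1 : 1 ≤ m / k := (Nat.one_le_div_iff (by omega)).2 hkm
      have h2 : m / k ≤ m := Nat.div_le_self m k
      exact ⟨⟨h1, by omega⟩, by omega⟩
    · intro j hj
      rw [Nat.mul_comm j k]
      exact Nat.mul_div_cancel_left j (by omega)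
    · intro m hm
      rw [Finset.mem_filter, Finset.mem_Icc] at hm
      exact Nat.div_mul_cancel hm.2
    · intros; rfl
  -- Step C : swap
  have stepC : ∑ k ∈ Icc 3 N, (S 3 N k : ℤ) * moebius k
      = ∑ m ∈ Icc 1 N, f m * ∑ k ∈ Icc 3 N, (if k ∣ m then (moebius k : ℤ) else 0) := by
    rw [Finset.sum_congr rfl (fun k hk => by rw [stepA k hk, stepB k hk])]
    simp only [Finset.sum_mul, ite_mul, zero_mul]
    rw [Finset.sum_comm]
    simp only [Finset.mul_sum, mul_ite, mul_zero]
  rw [stepC]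
  -- Step D/E : evaluate inner sums
  have stepD : ∑ m ∈ Icc 1 N, f m * ∑ k ∈ Icc 3 N, (if k ∣ m then (moebius k : ℤ) else 0)
      = ∑ m ∈ (Icc 1 N).filter (fun m => ¬ (m = 1 ∨ 2 ∣ m)), (-(Q 3 (N - m) : ℤ)) := by
    rw [Finset.sum_filter]
    apply Finset.sum_congr rfl
    intro m hm
    rw [Finset.mem_Icc] at hm
    rw [g_eval N m (by omega) hm.1 hm.2]
    by_cases hc : m = 1 ∨ 2 ∣ m
    · rw [if_pos hc, if_neg (fun h => h hc), mul_zero]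
    · rw [if_neg hc, if_pos hc]
      simp only [hf]
      rw [if_pos ⟨hm.1, hm.2⟩]
      ring
  rw [stepD]
  -- Step F : reindex
  rw [← Finset.sum_neg_distrib]
  apply Finset.sum_nbij' (fun m => (m - 3) / 2) (fun t => 2 * t + 3)
  · intro m hm
    simp only [Finset.mem_filter, Finset.mem_Icc] at hm
    rw [Finset.mem_range]
    omega
  · intro t ht
    rw [Finset.mem_range] at ht
    simp only [Finset.mem_filter, Finset.mem_Icc]
    omega
  · intro m hm
    simp only [Finset.mem_filter, Finset.mem_Icc] at hm
    omega
  · intro t ht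
    omega
  · intro m hm
    simp only [Finset.mem_filter, Finset.mem_Icc] at hm
    have he : n - 2 * ((m - 3) / 2) = N - m := by omega
    rw [he]


theorem card_no_one (n : ℕ) : Nat.card {P : Nat.Partition n // 1 ∉ P.parts} = Q 2 n := by
  rw [Nat.card_eq_fintype_card]
  unfold Q
  apply Fintype.card_congr
  apply Equiv.subtypeEquivRight
  intro P
  constructor
  · intro h i hi
    have h1 := P.parts_pos hi
    have h2 : i ≠ 1 := fun he => h (he ▸ hi)
    omega
  · intro h h1
    have := h 1 h1
    omega

theorem p_zero : p 0 = 1 := Fintype.card_unique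

theorem p_sub (n : ℕ) : (p n : ℤ) - pz ((n : ℤ) - 1) = (Q 2 n : ℤ) := by
  cases n with
  | zero =>
    have h1 : ((0 : ℕ) : ℤ) - 1 = -1 := by norm_num
    rw [h1]
    have h2 : pz (-1) = 0 := by unfold pz; norm_num
    rw [h2, p_zero, Q_zero]
    norm_num
  | succ m =>
    have h1 : ((m + 1 : ℕ) : ℤ) - 1 = (m : ℤ) := by push_cast; ring
    rw [h1]
    have h2 : pz (m : ℤ) = (p m : ℤ) := by
      unfold pz
      rw [if_pos (by positivity)]
      simp
    rw [h2]
    have h3 : p (m + 1) = Q 2 (m + 1) + p m := by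
      unfold p
      rw [← Q_one_eq_p (m + 1), ← Q_one_eq_p m]
      have := Q_rec 1 (m + 1) le_rfl (by omega)
      rw [show (1 : ℕ) + 1 = 2 from rfl] at this
      rw [this]
      congr 1
    rw [h3]
    push_cast
    ring

theorem no_one_parts_eq_neg_sum_S3_moebius (n : ℕ) :
    (Nat.card {P : Nat.Partition n // 1 ∉ P.parts} : ℤ) =
      -∑ k ∈ Finset.Icc 3 (n + 3),
          (S 3 (n + 3) k : ℤ) * ArithmeticFunction.moebius k ∧
    (p n : ℤ) - pz ((n : ℤ) - 1) =
      -∑ k ∈ Finset.Icc 3 (n + 3),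
          (S 3 (n + 3) k : ℤ) * ArithmeticFunction.moebius k := by
  have hkey := key n
  have hq : (Q 2 n : ℤ) = -∑ k ∈ Finset.Icc 3 (n + 3),
      (S 3 (n + 3) k : ℤ) * ArithmeticFunction.moebius k := by
    rw [hkey, neg_neg, Q2_sum n]
    push_cast
    rfl
  constructor
  · rw [card_no_one n]
    exact hq
  · rw [p_sub n]
    exact hq
end

section
/- For every integer n ≥ 3, the number of partitions of n with no parts equal to 1 and whose largest part occurs more than once equals p(n) - 2p(n-1) + p(n-2) (the second backward difference ∇²[p](n)). -/
open Finset

lemma msup_mem {s : Multiset ℕ} (hs : s ≠ 0) : s.sup ∈ s := by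
  induction s using Multiset.induction with
  | empty => simp at hs
  | cons a t ih =>
    rcases eq_or_ne t 0 with rfl | ht
    · simp
    · rw [Multiset.sup_cons]
      rcases le_total a t.sup with h | h
      · rw [sup_eq_right.mpr h]
        exact Multiset.mem_cons_of_mem (ih ht)
      · rw [sup_eq_left.mpr h]
        exact Multiset.mem_cons_self a t

lemma nat_card_split {α : Type*} [Fintype α] (pp q : α → Prop) :
    Nat.card {x // pp x ∧ q x} + Nat.card {x // pp x ∧ ¬ q x} = Nat.card {x // pp x} := by
  classical
  simp only [Nat.card_eq_fintype_card, Fintype.card_subtype]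
  rw [← Finset.filter_filter, ← Finset.filter_filter]
  exact Finset.card_filter_add_card_filter_not _

lemma nat_card_compl {α : Type*} [Fintype α] (q : α → Prop) :
    Nat.card {x // q x} + Nat.card {x // ¬ q x} = Fintype.card α := by
  classical
  simp only [Nat.card_eq_fintype_card, Fintype.card_subtype]
  rw [← Finset.card_univ]
  exact Finset.card_filter_add_card_filter_not _

/-- Removing one part equal to `1`. -/
def equivErase (n : ℕ) (hn : 1 ≤ n) :
    {P : Nat.Partition n // 1 ∈ P.parts} ≃ Nat.Partition (n - 1) where
  toFun P := ⟨P.1.parts.erase 1,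
    by intro i hi; exact P.1.parts_pos (Multiset.mem_of_mem_erase hi),
    by
      have h := Multiset.cons_erase P.2
      have hs : (1 ::ₘ P.1.parts.erase 1).sum = n := by rw [h, P.1.parts_sum]
      rw [Multiset.sum_cons] at hs
      omega⟩
  invFun Q := ⟨⟨1 ::ₘ Q.parts,
    by
      intro i hi
      rcases Multiset.mem_cons.mp hi with rfl | h
      · exact one_pos
      · exact Q.parts_pos h,
    by rw [Multiset.sum_cons, Q.parts_sum]; omega⟩, Multiset.mem_cons_self 1 _⟩
  left_inv P := by
    apply Subtype.ext; apply Nat.Partition.ext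
    exact Multiset.cons_erase P.2
  right_inv Q := by
    apply Nat.Partition.ext
    exact Multiset.erase_cons_head 1 Q.parts

lemma B_facts {n : ℕ} (hn : 3 ≤ n) (P : Nat.Partition n)
    (h : 1 ∉ P.parts ∧ ∃ m ∈ P.parts, (∀ i ∈ P.parts, i ≤ m) ∧ P.parts.count m = 1) :
    P.parts.sup ∈ P.parts ∧ 3 ≤ P.parts.sup ∧ P.parts.count P.parts.sup = 1 ∧
      ∀ i ∈ P.parts.erase P.parts.sup, i ≤ P.parts.sup - 1 := by
  obtain ⟨h1, m, hm, hmax, hcnt⟩ := h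
  have hsup : P.parts.sup = m := le_antisymm (Multiset.sup_le.mpr hmax) (Multiset.le_sup hm)
  subst hsup
  have hnotin : P.parts.sup ∉ P.parts.erase P.parts.sup := by
    rw [← Multiset.count_pos, Multiset.count_erase_self, hcnt]
    omega
  have hle : ∀ i ∈ P.parts.erase P.parts.sup, i ≤ P.parts.sup - 1 := by
    intro i hi
    have h1i : i ∈ P.parts := Multiset.mem_of_mem_erase hi
    have := hmax i h1i
    have : i ≠ P.parts.sup := by rintro rfl; exact hnotin hi
    omega
  refine ⟨hm, ?_, hcnt, hle⟩
  -- show 3 ≤ sup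
  have hsum : P.parts.sup + (P.parts.erase P.parts.sup).sum = n := by
    have := Multiset.cons_erase hm
    have h2 : (P.parts.sup ::ₘ P.parts.erase P.parts.sup).sum = n := by
      rw [this, P.parts_sum]
    rwa [Multiset.sum_cons] at h2
  rcases eq_or_ne (P.parts.erase P.parts.sup) 0 with he | he
  · rw [he] at hsum; simp at hsum; omega
  · obtain ⟨i, hi⟩ := Multiset.exists_mem_of_ne_zero he
    have h1i : i ∈ P.parts := Multiset.mem_of_mem_erase hi
    have hpos : 0 < i := P.parts_pos h1i
    have hne1 : i ≠ 1 := by rintro rfl; exact (h1 h1i)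
    have := hle i hi
    omega

lemma C_facts {k : ℕ} (hk : 1 ≤ k) (Q : Nat.Partition k) (h : 1 ∉ Q.parts) :
    Q.parts.sup ∈ Q.parts ∧ 2 ≤ Q.parts.sup := by
  have hne : Q.parts ≠ 0 := by
    intro h0
    have := Q.parts_sum
    rw [h0] at this
    simp at this
    omega
  have hmem := msup_mem hne
  have hpos := Q.parts_pos hmem
  have : Q.parts.sup ≠ 1 := by rintro h1; rw [h1] at hmem; exact h hmem
  exact ⟨hmem, by omega⟩

/-- Subtracting `1` from the (unique) largest part. -/
def equivB (n : ℕ) (hn : 3 ≤ n) :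
    {P : Nat.Partition n // 1 ∉ P.parts ∧
      ∃ m ∈ P.parts, (∀ i ∈ P.parts, i ≤ m) ∧ P.parts.count m = 1}
    ≃ {Q : Nat.Partition (n - 1) // 1 ∉ Q.parts} where
  toFun P := ⟨⟨(P.1.parts.sup - 1) ::ₘ P.1.parts.erase P.1.parts.sup,
    by
      intro i hi
      obtain ⟨hmem, h3, hcnt, hle⟩ := B_facts hn P.1 P.2
      rcases Multiset.mem_cons.mp hi with rfl | h
      · omega
      · exact P.1.parts_pos (Multiset.mem_of_mem_erase h),
    by
      obtain ⟨hmem, h3, hcnt, hle⟩ := B_facts hn P.1 P.2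
      have hsum : P.1.parts.sup + (P.1.parts.erase P.1.parts.sup).sum = n := by
        have hce := Multiset.cons_erase hmem
        have h2 : (P.1.parts.sup ::ₘ P.1.parts.erase P.1.parts.sup).sum = n := by
          rw [hce, P.1.parts_sum]
        rwa [Multiset.sum_cons] at h2
      rw [Multiset.sum_cons]
      omega⟩,
    by
      obtain ⟨hmem, h3, hcnt, hle⟩ := B_facts hn P.1 P.2
      intro hmem1
      rcases Multiset.mem_cons.mp hmem1 with h | h
      · omega
      · exact P.2.1 (Multiset.mem_of_mem_erase h)⟩
  invFun Q := ⟨⟨(Q.1.parts.sup + 1) ::ₘ Q.1.parts.erase Q.1.parts.sup,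
    by
      intro i hi
      rcases Multiset.mem_cons.mp hi with rfl | h
      · omega
      · exact Q.1.parts_pos (Multiset.mem_of_mem_erase h),
    by
      obtain ⟨hmem, h2⟩ := C_facts (by omega) Q.1 Q.2
      have hsum : Q.1.parts.sup + (Q.1.parts.erase Q.1.parts.sup).sum = n - 1 := by
        have hce := Multiset.cons_erase hmem
        have h2' : (Q.1.parts.sup ::ₘ Q.1.parts.erase Q.1.parts.sup).sum = n - 1 := by
          rw [hce, Q.1.parts_sum]
        rwa [Multiset.sum_cons] at h2'
      rw [Multiset.sum_cons]
      omega⟩,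
    by
      obtain ⟨hmem, h2⟩ := C_facts (by omega) Q.1 Q.2
      have hnotin : Q.1.parts.sup + 1 ∉ Q.1.parts := by
        intro hx
        have := Multiset.le_sup hx
        omega
      constructor
      · intro hmem1
        rcases Multiset.mem_cons.mp hmem1 with h | h
        · omega
        · exact Q.2 (Multiset.mem_of_mem_erase h)
      · refine ⟨Q.1.parts.sup + 1, Multiset.mem_cons_self _ _, ?_, ?_⟩
        · intro i hi
          rcases Multiset.mem_cons.mp hi with rfl | h
          · exact le_refl _
          · have := Multiset.le_sup (Multiset.mem_of_mem_erase h)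
            omega
        · rw [Multiset.count_cons_self]
          have : (Q.1.parts.erase Q.1.parts.sup).count (Q.1.parts.sup + 1) ≤
              Q.1.parts.count (Q.1.parts.sup + 1) :=
            Multiset.count_le_of_le _ (Multiset.erase_le _ _)
          have h0 : Q.1.parts.count (Q.1.parts.sup + 1) = 0 :=
            Multiset.count_eq_zero.mpr hnotin
          omega⟩
  left_inv P := by
    apply Subtype.ext; apply Nat.Partition.ext
    obtain ⟨hmem, h3, hcnt, hle⟩ := B_facts hn P.1 P.2
    show (((P.1.parts.sup - 1) ::ₘ P.1.parts.erase P.1.parts.sup).sup + 1) ::ₘ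
        (((P.1.parts.sup - 1) ::ₘ P.1.parts.erase P.1.parts.sup).erase
          ((P.1.parts.sup - 1) ::ₘ P.1.parts.erase P.1.parts.sup).sup) = P.1.parts
    have hsup : ((P.1.parts.sup - 1) ::ₘ P.1.parts.erase P.1.parts.sup).sup =
        P.1.parts.sup - 1 := by
      rw [Multiset.sup_cons]
      exact sup_eq_left.mpr (Multiset.sup_le.mpr hle)
    rw [hsup, Multiset.erase_cons_head]
    have : P.1.parts.sup - 1 + 1 = P.1.parts.sup := by omega
    rw [this]
    exact Multiset.cons_erase hmem
  right_inv Q := by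
    apply Subtype.ext; apply Nat.Partition.ext
    obtain ⟨hmem, h2⟩ := C_facts (by omega) Q.1 Q.2
    show (((Q.1.parts.sup + 1) ::ₘ Q.1.parts.erase Q.1.parts.sup).sup - 1) ::ₘ
        (((Q.1.parts.sup + 1) ::ₘ Q.1.parts.erase Q.1.parts.sup).erase
          ((Q.1.parts.sup + 1) ::ₘ Q.1.parts.erase Q.1.parts.sup).sup) = Q.1.parts
    have hsup : ((Q.1.parts.sup + 1) ::ₘ Q.1.parts.erase Q.1.parts.sup).sup =
        Q.1.parts.sup + 1 := by
      rw [Multiset.sup_cons]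
      refine sup_eq_left.mpr (Multiset.sup_le.mpr ?_)
      intro b hb
      have := Multiset.le_sup (Multiset.mem_of_mem_erase hb)
      omega
    rw [hsup, Multiset.erase_cons_head]
    simp only [Nat.add_sub_cancel]
    exact Multiset.cons_erase hmem

lemma B_iff {n : ℕ} (hn : 3 ≤ n) (P : Nat.Partition n) (h1 : 1 ∉ P.parts) :
    (¬ ∃ m ∈ P.parts, (∀ i ∈ P.parts, i ≤ m) ∧ 2 ≤ P.parts.count m) ↔
    (∃ m ∈ P.parts, (∀ i ∈ P.parts, i ≤ m) ∧ P.parts.count m = 1) := by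
  have hne : P.parts ≠ 0 := by
    intro h0
    have := P.parts_sum
    rw [h0] at this
    simp at this
    omega
  have hmem := msup_mem hne
  have hpos : 0 < P.parts.count P.parts.sup := Multiset.count_pos.mpr hmem
  constructor
  · intro h
    refine ⟨P.parts.sup, hmem, fun i hi => Multiset.le_sup hi, ?_⟩
    by_contra hc
    exact h ⟨P.parts.sup, hmem, fun i hi => Multiset.le_sup hi, by omega⟩
  · rintro ⟨m, hm, hmax, hc⟩ ⟨m', hm', hmax', hc'⟩
    have : m = m' := le_antisymm (hmax' m hm) (hmax m' hm')
    subst this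
    omega

lemma C_count (k : ℕ) (hk : 1 ≤ k) :
    p (k - 1) + Nat.card {P : Nat.Partition k // 1 ∉ P.parts} = p k := by
  have h := nat_card_compl (fun P : Nat.Partition k => 1 ∈ P.parts)
  have he : Nat.card {P : Nat.Partition k // 1 ∈ P.parts} = p (k - 1) := by
    rw [Nat.card_congr (equivErase k hk), Nat.card_eq_fintype_card]
    rfl
  rw [he] at h
  exact h

theorem card_no_ones_max_repeated_eq_nabla_sq (n : ℕ) (hn : 3 ≤ n) :
    (Nat.card {P : Nat.Partition n //
        1 ∉ P.parts ∧
        ∃ m ∈ P.parts, (∀ i ∈ P.parts, i ≤ m) ∧ 2 ≤ P.parts.count m} : ℤ) =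
      (p n : ℤ) - 2 * (p (n - 1) : ℤ) + (p (n - 2) : ℤ) := by
  classical
  have hsplit := nat_card_split (fun P : Nat.Partition n => 1 ∉ P.parts)
    (fun P : Nat.Partition n => ∃ m ∈ P.parts, (∀ i ∈ P.parts, i ≤ m) ∧ 2 ≤ P.parts.count m)
  have hBeq : Nat.card {P : Nat.Partition n // 1 ∉ P.parts ∧
        ¬ ∃ m ∈ P.parts, (∀ i ∈ P.parts, i ≤ m) ∧ 2 ≤ P.parts.count m} =
      Nat.card {P : Nat.Partition n // 1 ∉ P.parts ∧
        ∃ m ∈ P.parts, (∀ i ∈ P.parts, i ≤ m) ∧ P.parts.count m = 1} :=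
    Nat.card_congr (Equiv.subtypeEquivRight (fun P =>
      and_congr_right (fun h1 => B_iff hn P h1)))
  have hB : Nat.card {P : Nat.Partition n // 1 ∉ P.parts ∧
        ∃ m ∈ P.parts, (∀ i ∈ P.parts, i ≤ m) ∧ P.parts.count m = 1} =
      Nat.card {Q : Nat.Partition (n - 1) // 1 ∉ Q.parts} :=
    Nat.card_congr (equivB n hn)
  have hC1 := C_count n (by omega)
  have hC2 := C_count (n - 1) (by omega)
  have hsub : n - 1 - 1 = n - 2 := by omega
  rw [hsub] at hC2
  rw [hBeq, hB] at hsplit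
  omega
end
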